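/- If Assumptions (A), (B), and (C) hold, then for every λ ∈ ℝ \ (closure(Δ([0,∞))) ∪ {d_∞}) the following limits exist, are finite and satisfy: lim_{t→∞} (∂π/∂t)(t,λ)/π(t,λ) = 0, lim_{t→∞} ρ(t,λ)/π(t,λ) ∈ ℝ, and lim_{t→∞} κ(t,λ)/π(t,λ) ∈ ℝ. -/

import Mathlib

noncomputable section
open MeasureTheory Set Filter Topology

namespace PaperEss

/-- The leading Schur-complement coefficient `π(t, λ) = p(t) − |b(t)|²/(d(t) − λ)`. -/
def pir (p : ℝ → ℝ) (b : ℝ → ℂ) (d : ℝ → ℝ) (l : ℂ) (t : ℝ) : ℂ :=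
  (p t : ℂ) - (‖b t‖ : ℂ) ^ 2 / ((d t : ℂ) - l)

/-- `ρ(t, λ) = −2 Im (b c̄)/(d − λ) + i ∂π/∂t`. -/
def rho (p : ℝ → ℝ) (b c : ℝ → ℂ) (d : ℝ → ℝ) (l : ℂ) (t : ℝ) : ℂ :=
  -(2 * ((b t * (starRingEnd ℂ) (c t)).im : ℂ)) / ((d t : ℂ) - l)
    + Complex.I * deriv (pir p b d l) t

/-- `κ(t, λ) = q − λ − |c|²/(d − λ) + (d/dt)(b̄ c/(d − λ))`. -/
def kap (p q : ℝ → ℝ) (b c : ℝ → ℂ) (d : ℝ → ℝ) (l : ℂ) (t : ℝ) : ℂ :=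
  (q t : ℂ) - l - (‖c t‖ : ℂ) ^ 2 / ((d t : ℂ) - l)
    + deriv (fun s => (starRingEnd ℂ) (b s) * c s / ((d s : ℂ) - l)) t

/-- `Δ(t) = d(t) − |b(t)|²/p(t)`. -/
def Del (p : ℝ → ℝ) (b : ℝ → ℂ) (d : ℝ → ℝ) (t : ℝ) : ℝ := d t - ‖b t‖ ^ 2 / p t

/-- **Assumption (A)**: smoothness and positivity of the coefficients on `[0, ∞)`. -/
structure AssA (p q d : ℝ → ℝ) (b c : ℝ → ℂ) : Prop where
  hp : ContDiffOn ℝ 2 p (Ici 0)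
  hd : ContDiffOn ℝ 2 d (Ici 0)
  hb : ContDiffOn ℝ 2 b (Ici 0)
  hc : ContDiffOn ℝ 1 c (Ici 0)
  hq : ContinuousOn q (Ici 0)
  hppos : ∀ t ∈ Ici (0 : ℝ), 0 < p t

/-- **Assumption (B)**: `L` is the (possibly improper) limit of `d` at `∞` (B1);
growth bounds on `b`, `c` (B2); boundedness conditions (B3a), (B3b). -/
structure AssB (p q d : ℝ → ℝ) (b c : ℝ → ℂ) (L : EReal) : Prop where
  hB1 : Tendsto (fun t => (d t : EReal)) atTop (nhds L)
  hB2 : ∃ β > (0 : ℝ), ∃ γ > (0 : ℝ), ∀ t ≥ (0 : ℝ),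
    ‖b t‖ ≤ β * (|d t| + 1) ∧ ‖c t‖ ≤ γ * (|d t| + 1)
  hB3a : ∃ l : ℝ, (l : EReal) ≠ L ∧ ∃ tl ≥ (0 : ℝ), (∀ t ≥ tl, d t ≠ l) ∧
    ∃ M : ℝ, ∀ t ≥ tl, ‖pir p b d (l : ℂ) t‖ ≤ M
  hB3b : ∀ l : ℝ, l ∉ closure (Del p b d '' Ici 0) → (l : EReal) ≠ L →
    ∃ tl ≥ (0 : ℝ), (∀ t ≥ tl, d t ≠ l) ∧
      ∃ M : ℝ, ∀ t ≥ tl, ‖rho p b c d (l : ℂ) t‖ ≤ M ∧ ‖kap p q b c d (l : ℂ) t‖ ≤ M ∧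
        ‖(pir p b d (l : ℂ) t)⁻¹‖ ≤ M

/-- **Assumption (C)**: the limits of `ρ/π` and `κ/π` at `∞` exist and are finite. -/
def AssC (p q d : ℝ → ℝ) (b c : ℝ → ℂ) (L : EReal) : Prop :=
  ∀ l : ℝ, l ∉ closure (Del p b d '' Ici 0) → (l : EReal) ≠ L →
    (∃ z : ℂ, Tendsto (fun t => rho p b c d (l : ℂ) t / pir p b d (l : ℂ) t) atTop (nhds z)) ∧
    (∃ z : ℂ, Tendsto (fun t => kap p q b c d (l : ℂ) t / pir p b d (l : ℂ) t) atTop (nhds z))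

/-- The singular part of the essential spectrum, described via the limits of `ρ/π`, `κ/π`. -/
def singSet (p q d : ℝ → ℝ) (b c : ℝ → ℂ) (L : EReal) : Set ℝ :=
  {l : ℝ | l ∉ closure (Del p b d '' Ici 0) ∧ (l : EReal) ≠ L ∧
    ∃ r k : ℝ, Tendsto (fun t => rho p b c d (l : ℂ) t / pir p b d (l : ℂ) t)
        atTop (nhds (r : ℂ)) ∧
      Tendsto (fun t => kap p q b c d (l : ℂ) t / pir p b d (l : ℂ) t) atTop (nhds (k : ℂ)) ∧
      r ^ 2 - 4 * k ≥ 0}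

/-- **(C1)**: finite limits of `π` and `∂π/∂t` at `∞`, with nonzero limit of `π`. -/
structure AssC1 (p q d : ℝ → ℝ) (b c : ℝ → ℂ) (L : EReal) : Prop where
  hlim : ∀ l : ℝ, l ∉ closure (Del p b d '' Ici 0) → (l : EReal) ≠ L →
    (∃ z : ℂ, Tendsto (pir p b d (l : ℂ)) atTop (nhds z)) ∧
    (∃ z : ℂ, Tendsto (fun t => deriv (pir p b d (l : ℂ)) t) atTop (nhds z))
  hne : ∃ l : ℝ, l ∉ closure (Del p b d '' Ici 0) ∧ (l : EReal) ≠ L ∧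
    ∃ z : ℂ, z ≠ 0 ∧ Tendsto (pir p b d (l : ℂ)) atTop (nhds z)

/-- **(C2)**: finite limits of `b̄c/(d−λ)` and its derivative at `∞`. -/
def AssC2 (b c : ℝ → ℂ) (d : ℝ → ℝ) (L : EReal) : Prop :=
  ∀ l : ℝ, (l : EReal) ≠ L →
    (∃ z : ℂ, Tendsto (fun t => (starRingEnd ℂ) (b t) * c t / ((d t : ℂ) - (l : ℂ)))
      atTop (nhds z)) ∧
    (∃ z : ℂ, Tendsto
      (fun t => deriv (fun s => (starRingEnd ℂ) (b s) * c s / ((d s : ℂ) - (l : ℂ))) t)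
      atTop (nhds z))

/-- **(C3)**: finite limit of `q − λ − |c|²/(d−λ)` at `∞`. -/
def AssC3 (q d : ℝ → ℝ) (c : ℝ → ℂ) (L : EReal) : Prop :=
  ∀ l : ℝ, (l : EReal) ≠ L →
    ∃ z : ℂ, Tendsto (fun t => (q t : ℂ) - (l : ℂ) - (‖c t‖ : ℂ) ^ 2 / ((d t : ℂ) - (l : ℂ)))
      atTop (nhds z)


/-! ### Auxiliary material -/

/-- Real-valued version of `pir`. -/
def Fr (p : ℝ → ℝ) (b : ℝ → ℂ) (d : ℝ → ℝ) (l : ℝ) (t : ℝ) : ℝ :=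
  p t - ‖b t‖ ^ 2 / (d t - l)

/-- The auxiliary complex function `b̄c/(d−λ)`. -/
def Hc (b c : ℝ → ℂ) (d : ℝ → ℝ) (l : ℝ) (s : ℝ) : ℂ :=
  (starRingEnd ℂ) (b s) * c s / ((d s : ℂ) - (l : ℂ))

/-- Imaginary part of `Hc`. -/
def Gr (b c : ℝ → ℂ) (d : ℝ → ℝ) (l : ℝ) (t : ℝ) : ℝ := (Hc b c d l t).im

lemma pir_eq (p : ℝ → ℝ) (b : ℝ → ℂ) (d : ℝ → ℝ) (l : ℝ) (t : ℝ) :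
    pir p b d (l : ℂ) t = ((Fr p b d l t : ℝ) : ℂ) := by
  unfold pir Fr; push_cast; ring

lemma div_ofReal_im (z : ℂ) (w : ℝ) : (z / (w : ℂ)).im = z.im / w := by
  rcases eq_or_ne w 0 with h | h
  · simp [h]
  · rw [div_eq_mul_inv, ← Complex.ofReal_inv]; simp [div_eq_mul_inv, h]

lemma div_ofReal_re (z : ℂ) (w : ℝ) : (z / (w : ℂ)).re = z.re / w := by
  rcases eq_or_ne w 0 with h | h
  · simp [h]
  · rw [div_eq_mul_inv, ← Complex.ofReal_inv]; simp [div_eq_mul_inv, h]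

lemma norm_ofReal_eq (r : ℝ) : ‖((r : ℝ) : ℂ)‖ = |r| := by
  rw [Complex.norm_real, Real.norm_eq_abs]

lemma nsq_eq (b : ℝ → ℂ) : (fun s => ‖b s‖ ^ 2) = fun s => (b s).re ^ 2 + (b s).im ^ 2 :=
  funext fun s => by rw [Complex.sq_norm, Complex.normSq_apply]; ring

lemma Fr_diff {p : ℝ → ℝ} {b : ℝ → ℂ} {d : ℝ → ℝ} {l t : ℝ}
    (hp : DifferentiableAt ℝ p t) (hb : DifferentiableAt ℝ b t)
    (hd : DifferentiableAt ℝ d t) (hne : d t ≠ l) :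
    DifferentiableAt ℝ (Fr p b d l) t := by
  have hb2 : DifferentiableAt ℝ (fun s => ‖b s‖ ^ 2) t := by
    rw [nsq_eq]
    exact ((Complex.reCLM.differentiableAt.comp t hb).pow 2).add
      ((Complex.imCLM.differentiableAt.comp t hb).pow 2)
  exact hp.sub (hb2.div (hd.sub_const l) (sub_ne_zero.mpr hne))

lemma Hc_diff {b c : ℝ → ℂ} {d : ℝ → ℝ} {l t : ℝ}
    (hb : DifferentiableAt ℝ b t) (hc : DifferentiableAt ℝ c t)
    (hd : DifferentiableAt ℝ d t) (hne : d t ≠ l) :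
    DifferentiableAt ℝ (Hc b c d l) t := by
  have hconj : DifferentiableAt ℝ (fun s => (starRingEnd ℂ) (b s)) t :=
    Complex.conjCLE.differentiableAt.comp t hb
  have hdC : DifferentiableAt ℝ (fun s => ((d s : ℝ) : ℂ)) t :=
    Complex.ofRealCLM.differentiableAt.comp t hd
  have hneC : ((d t : ℝ) : ℂ) - (l : ℂ) ≠ 0 := by
    rw [show ((d t : ℝ) : ℂ) - (l : ℂ) = ((d t - l : ℝ) : ℂ) by push_cast; ring]
    exact_mod_cast sub_ne_zero.mpr hne
  exact (hconj.mul hc).div (hdC.sub_const _) hneC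

lemma deriv_pir_eq {p : ℝ → ℝ} {b : ℝ → ℂ} {d : ℝ → ℝ} {l : ℝ} {t : ℝ}
    (hF : DifferentiableAt ℝ (Fr p b d l) t) :
    deriv (pir p b d (l : ℂ)) t = ((deriv (Fr p b d l) t : ℝ) : ℂ) := by
  have h1 : HasDerivAt (fun s => ((Fr p b d l s : ℝ) : ℂ))
      ((deriv (Fr p b d l) t : ℝ) : ℂ) t := hF.hasDerivAt.ofReal_comp
  have h2 : (fun s => ((Fr p b d l s : ℝ) : ℂ)) = pir p b d (l : ℂ) :=
    funext fun s => (pir_eq p b d l s).symm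
  rw [h2] at h1; exact h1.deriv

lemma Gr_hasDeriv {b c : ℝ → ℂ} {d : ℝ → ℝ} {l t : ℝ}
    (hH : DifferentiableAt ℝ (Hc b c d l) t) :
    HasDerivAt (Gr b c d l) ((deriv (Hc b c d l) t).im) t :=
  Complex.imCLM.hasFDerivAt.comp_hasDerivAt t hH.hasDerivAt

lemma Gr_eq (b c : ℝ → ℂ) (d : ℝ → ℝ) (l : ℝ) (t : ℝ) :
    Gr b c d l t = ((starRingEnd ℂ) (b t) * c t).im / (d t - l) := by
  unfold Gr Hc
  rw [show ((d t : ℝ) : ℂ) - (l : ℂ) = ((d t - l : ℝ) : ℂ) by push_cast; ring]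
  exact div_ofReal_im _ _

lemma rho_re_im {p : ℝ → ℝ} {b c : ℝ → ℂ} {d : ℝ → ℝ} {l : ℝ} {t : ℝ}
    (hF : DifferentiableAt ℝ (Fr p b d l) t) :
    (rho p b c d (l : ℂ) t).re = 2 * Gr b c d l t ∧
      (rho p b c d (l : ℂ) t).im = deriv (Fr p b d l) t := by
  have hGr : Gr b c d l t = -(2 * (b t * (starRingEnd ℂ) (c t)).im) / (d t - l) / 2 := by
    rw [Gr_eq]
    have : ((starRingEnd ℂ) (b t) * c t).im = -(b t * (starRingEnd ℂ) (c t)).im := by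
      simp [Complex.mul_im]; ring
    rw [this]; ring
  set v : ℝ := -(2 * (b t * (starRingEnd ℂ) (c t)).im) / (d t - l) with hv
  set u : ℝ := deriv (Fr p b d l) t with hu
  have e0 : rho p b c d (l : ℂ) t = (v : ℂ) + Complex.I * (u : ℂ) := by
    rw [rho, deriv_pir_eq hF, ← hu]
    congr 1
    rw [hv]; push_cast; ring
  rw [e0]
  constructor
  · have hre : ((v : ℂ) + Complex.I * (u : ℂ)).re = v := by simp
    rw [hre, hGr]; ring
  · simp

lemma kap_im {p q : ℝ → ℝ} {b c : ℝ → ℂ} {d : ℝ → ℝ} {l : ℝ} {t : ℝ} :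
    (kap p q b c d (l : ℂ) t).im = (deriv (Hc b c d l) t).im := by
  rw [kap]
  have e1 : (q t : ℂ) - (l : ℂ) - ((‖c t‖ : ℝ) : ℂ) ^ 2 / ((d t : ℂ) - (l : ℂ))
      = ((q t - l - ‖c t‖ ^ 2 / (d t - l) : ℝ) : ℂ) := by push_cast; ring
  have e2 : (fun s => (starRingEnd ℂ) (b s) * c s / ((d s : ℂ) - (l : ℂ))) = Hc b c d l :=
    rfl
  rw [e1, e2]
  set w : ℝ := q t - l - ‖c t‖ ^ 2 / (d t - l) with hw
  simp

/-- A bounded eventually-differentiable real function cannot have derivative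
eventually bounded away from `0`. -/
lemma no_big_deriv {f : ℝ → ℝ} {C eps : ℝ} (heps : 0 < eps)
    (h : ∀ᶠ t in atTop, DifferentiableAt ℝ f t ∧ |f t| ≤ C ∧ eps ≤ |deriv f t|) :
    False := by
  rw [eventually_atTop] at h
  obtain ⟨T, hT⟩ := h
  have hC : 0 ≤ C := le_trans (abs_nonneg _) (hT T le_rfl).2.1
  have hpos : 0 < (2 * C + 1) / eps := div_pos (by linarith) heps
  have hTb : T < T + (2 * C + 1) / eps := by linarith
  obtain ⟨x, hx, hdx⟩ := exists_deriv_eq_slope f hTb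
    (fun t ht => ((hT t ht.1).1.continuousAt.continuousWithinAt))
    (fun t ht => ((hT t ht.1.le).1.differentiableWithinAt))
  have h1 : eps ≤ |deriv f x| := (hT x hx.1.le).2.2
  rw [hdx] at h1
  have h2 : |f (T + (2 * C + 1) / eps) - f T| ≤ 2 * C := by
    have ha := (hT (T + (2 * C + 1) / eps) hTb.le).2.1
    have hb := (hT T le_rfl).2.1
    calc |f (T + (2 * C + 1) / eps) - f T| ≤ |f (T + (2 * C + 1) / eps)| + |f T| :=
          abs_sub _ _
      _ ≤ 2 * C := by linarith
  rw [abs_div] at h1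
  have h3 : |T + (2 * C + 1) / eps - T| = (2 * C + 1) / eps := by
    rw [show T + (2 * C + 1) / eps - T = (2 * C + 1) / eps by ring]
    exact abs_of_pos hpos
  rw [h3] at h1
  have h4 : eps * ((2 * C + 1) / eps) ≤ |f (T + (2 * C + 1) / eps) - f T| :=
    (le_div_iff₀ hpos).mp h1
  rw [mul_div_cancel₀ _ (ne_of_gt heps)] at h4
  linarith

/-- If `d → L` in `EReal` and `μ ≠ L`, then eventually `|d| + 1 ≤ K |d − μ|`. -/
lemma dbound {d : ℝ → ℝ} {L : EReal}
    (hB1 : Tendsto (fun t => (d t : EReal)) atTop (nhds L))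
    {mu : ℝ} (hmu : (mu : EReal) ≠ L) :
    ∃ K > (0 : ℝ), ∀ᶠ t in atTop, |d t| + 1 ≤ K * |d t - mu| := by
  induction L using EReal.rec with
  | top =>
    refine ⟨4, by norm_num, ?_⟩
    filter_upwards [EReal.tendsto_nhds_top_iff_real.mp hB1 (2 * |mu| + 2)] with t ht
    have ht' : 2 * |mu| + 2 < d t := by exact_mod_cast ht
    have h1 : |d t| = d t := abs_of_pos (by linarith [abs_nonneg mu])
    have h2 : d t - mu ≤ |d t - mu| := le_abs_self _
    have h3 : mu ≤ |mu| := le_abs_self mu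
    linarith [abs_nonneg mu]
  | coe y =>
    have hy : mu ≠ y := fun h => hmu (by rw [h])
    have hd : Tendsto d atTop (nhds y) := EReal.tendsto_coe.mp hB1
    have habs : 0 < |mu - y| := abs_pos.mpr (sub_ne_zero.mpr hy)
    have heps : 0 < |mu - y| / 2 := by linarith
    refine ⟨(|y| + |mu - y| / 2 + 1) / (|mu - y| / 2), div_pos (by positivity) heps, ?_⟩
    filter_upwards [Metric.tendsto_nhds.mp hd (|mu - y| / 2) heps] with t ht
    rw [Real.dist_eq] at ht
    have h1 : |d t| ≤ |y| + |mu - y| / 2 := by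
      have := abs_sub_abs_le_abs_sub (d t) y
      linarith
    have h2 : |mu - y| / 2 ≤ |d t - mu| := by
      have ha : |mu - y| ≤ |mu - d t| + |d t - y| := abs_sub_le mu (d t) y
      have hb : |d t - mu| = |mu - d t| := abs_sub_comm _ _
      linarith
    have h4 : (|y| + |mu - y| / 2 + 1) / (|mu - y| / 2) * (|mu - y| / 2)
        ≤ (|y| + |mu - y| / 2 + 1) / (|mu - y| / 2) * |d t - mu| :=
      mul_le_mul_of_nonneg_left h2 (by positivity)
    rw [div_mul_cancel₀ _ (ne_of_gt heps)] at h4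
    linarith
  | bot =>
    refine ⟨4, by norm_num, ?_⟩
    filter_upwards [EReal.tendsto_nhds_bot_iff_real.mp hB1 (-(2 * |mu| + 2))] with t ht
    have ht' : d t < -(2 * |mu| + 2) := by exact_mod_cast ht
    have h1 : |d t| = -d t := abs_of_neg (by linarith [abs_nonneg mu])
    have h2 : -(d t - mu) ≤ |d t - mu| := neg_le_abs _
    have h3 : -mu ≤ |mu| := neg_le_abs mu
    linarith [abs_nonneg mu]

/-- The real function `Fr` is eventually bounded. -/
lemma Fr_bounded {p q d : ℝ → ℝ} {b c : ℝ → ℂ} {L : EReal}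
    (hB : AssB p q d b c L) (l : ℝ) (hl2 : (l : EReal) ≠ L) :
    ∃ C : ℝ, ∀ᶠ t in atTop, |Fr p b d l t| ≤ C := by
  obtain ⟨beta, hbeta, gamma, hgamma, hbc⟩ := hB.hB2
  obtain ⟨l0, hl0L, t0, ht0, hdne0, M0, hM0⟩ := hB.hB3a
  obtain ⟨K0, hK0, hev0⟩ := dbound hB.hB1 hl0L
  obtain ⟨K1, hK1, hev1⟩ := dbound hB.hB1 hl2
  refine ⟨M0 + beta ^ 2 * K0 * K1 * |l0 - l|, ?_⟩
  filter_upwards [hev0, hev1, eventually_ge_atTop (max t0 0)] with t h0 h1 ht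
  have htt0 : t ≥ t0 := le_trans (le_max_left _ _) ht
  have ht0' : t ≥ 0 := le_trans (le_max_right _ _) ht
  have hd1 : d t ≠ l := by
    intro h; rw [h] at h1; simp at h1; linarith [abs_nonneg (l : ℝ)]
  have hd0 : d t ≠ l0 := hdne0 t htt0
  have hx0 : d t - l0 ≠ 0 := sub_ne_zero.mpr hd0
  have hx1 : d t - l ≠ 0 := sub_ne_zero.mpr hd1
  have hFeq : Fr p b d l t
      = Fr p b d l0 t + ‖b t‖ ^ 2 * (l0 - l) / ((d t - l0) * (d t - l)) := by
    unfold Fr; field_simp; ring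
  have hM0t : |Fr p b d l0 t| ≤ M0 := by
    have := hM0 t htt0
    rwa [pir_eq, norm_ofReal_eq] at this
  have hb2 : ‖b t‖ ^ 2 ≤ beta ^ 2 * (|d t| + 1) ^ 2 := by
    have := (hbc t ht0').1
    nlinarith [norm_nonneg (b t), abs_nonneg (d t)]
  have hprod : (|d t| + 1) ^ 2 ≤ (K0 * |d t - l0|) * (K1 * |d t - l|) := by
    nlinarith [mul_le_mul h0 h1 (by positivity : (0:ℝ) ≤ |d t| + 1)
      (le_trans (by positivity) h0)]
  have key : ‖b t‖ ^ 2 ≤ beta ^ 2 * K0 * K1 * (|d t - l0| * |d t - l|) := by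
    nlinarith [hb2, hprod, sq_nonneg beta]
  have hpos : 0 < |d t - l0| * |d t - l| := mul_pos (abs_pos.mpr hx0) (abs_pos.mpr hx1)
  have habs : |‖b t‖ ^ 2 * (l0 - l) / ((d t - l0) * (d t - l))|
      ≤ beta ^ 2 * K0 * K1 * |l0 - l| := by
    rw [abs_div, abs_mul, abs_mul, abs_of_nonneg (by positivity : (0:ℝ) ≤ ‖b t‖ ^ 2)]
    rw [div_le_iff₀ hpos]
    nlinarith [mul_le_mul_of_nonneg_right key (abs_nonneg (l0 - l))]
  rw [hFeq]
  calc |Fr p b d l0 t + ‖b t‖ ^ 2 * (l0 - l) / ((d t - l0) * (d t - l))|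
      ≤ |Fr p b d l0 t| + |‖b t‖ ^ 2 * (l0 - l) / ((d t - l0) * (d t - l))| := abs_add_le _ _
    _ ≤ M0 + beta ^ 2 * K0 * K1 * |l0 - l| := by linarith

/-- Under Assumptions (A), (B), (C), for every
`λ ∈ ℝ \ (closure(Δ([0,∞))) ∪ {d_∞})` the limits `(∂π/∂t)/π → 0`, and `ρ/π`, `κ/π` have
finite *real* limits at `∞`. -/
theorem limits_real_of_AssC (p q d : ℝ → ℝ) (b c : ℝ → ℂ) (L : EReal)
    (hA : AssA p q d b c) (hB : AssB p q d b c L) (hC : AssC p q d b c L)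
    (l : ℝ) (hl1 : l ∉ closure (Del p b d '' Ici 0)) (hl2 : (l : EReal) ≠ L) :
    Tendsto (fun t => deriv (pir p b d (l : ℂ)) t / pir p b d (l : ℂ) t) atTop (nhds 0) ∧
    (∃ r : ℝ, Tendsto (fun t => rho p b c d (l : ℂ) t / pir p b d (l : ℂ) t)
      atTop (nhds (r : ℂ))) ∧
    (∃ r : ℝ, Tendsto (fun t => kap p q b c d (l : ℂ) t / pir p b d (l : ℂ) t)
      atTop (nhds (r : ℂ))) := by
  obtain ⟨⟨z₁, hz₁⟩, ⟨z₂, hz₂⟩⟩ := hC l hl1 hl2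
  obtain ⟨tl, htl, hdne, M, hM⟩ := hB.hB3b l hl1 hl2
  have hdiffp : ∀ᶠ t in atTop, DifferentiableAt ℝ p t := by
    filter_upwards [eventually_gt_atTop 0] with t ht
    exact (hA.hp.differentiableOn (by norm_num)).differentiableAt (Ici_mem_nhds ht)
  have hdiffd : ∀ᶠ t in atTop, DifferentiableAt ℝ d t := by
    filter_upwards [eventually_gt_atTop 0] with t ht
    exact (hA.hd.differentiableOn (by norm_num)).differentiableAt (Ici_mem_nhds ht)
  have hdiffb : ∀ᶠ t in atTop, DifferentiableAt ℝ b t := by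
    filter_upwards [eventually_gt_atTop 0] with t ht
    exact (hA.hb.differentiableOn (by norm_num)).differentiableAt (Ici_mem_nhds ht)
  have hdiffc : ∀ᶠ t in atTop, DifferentiableAt ℝ c t := by
    filter_upwards [eventually_gt_atTop 0] with t ht
    exact (hA.hc.differentiableOn (by norm_num)).differentiableAt (Ici_mem_nhds ht)
  have hdl : ∀ᶠ t in atTop, d t ≠ l := by
    filter_upwards [eventually_ge_atTop tl] with t ht
    exact hdne t ht
  have hFd : ∀ᶠ t in atTop, DifferentiableAt ℝ (Fr p b d l) t := by
    filter_upwards [hdiffp, hdiffb, hdiffd, hdl] with t h1 h2 h3 h4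
    exact Fr_diff h1 h2 h3 h4
  have hHd : ∀ᶠ t in atTop, DifferentiableAt ℝ (Hc b c d l) t := by
    filter_upwards [hdiffb, hdiffc, hdiffd, hdl] with t h1 h2 h3 h4
    exact Hc_diff h1 h2 h3 h4
  have hIm1 : ∀ᶠ t in atTop, (rho p b c d (l : ℂ) t / pir p b d (l : ℂ) t).im
      = deriv (Fr p b d l) t / Fr p b d l t := by
    filter_upwards [hFd] with t ht
    rw [pir_eq, div_ofReal_im, (rho_re_im ht).2]
  have hRe1 : ∀ᶠ t in atTop, (rho p b c d (l : ℂ) t / pir p b d (l : ℂ) t).re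
      = 2 * Gr b c d l t / Fr p b d l t := by
    filter_upwards [hFd] with t ht
    rw [pir_eq, div_ofReal_re, (rho_re_im ht).1]
  have hIm2 : ∀ᶠ t in atTop, (kap p q b c d (l : ℂ) t / pir p b d (l : ℂ) t).im
      = deriv (Gr b c d l) t / Fr p b d l t := by
    filter_upwards [hHd] with t ht
    rw [pir_eq, div_ofReal_im, kap_im, (Gr_hasDeriv ht).deriv]
  have tIm1 : Tendsto (fun t => deriv (Fr p b d l) t / Fr p b d l t) atTop (nhds z₁.im) :=
    ((Complex.continuous_im.tendsto z₁).comp hz₁).congr' hIm1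
  have tRe1 : Tendsto (fun t => 2 * Gr b c d l t / Fr p b d l t) atTop (nhds z₁.re) :=
    ((Complex.continuous_re.tendsto z₁).comp hz₁).congr' hRe1
  have tGF : Tendsto (fun t => Gr b c d l t / Fr p b d l t) atTop (nhds (z₁.re / 2)) :=
    (tRe1.div_const 2).congr fun t => by ring
  have tIm2 : Tendsto (fun t => deriv (Gr b c d l) t / Fr p b d l t) atTop (nhds z₂.im) :=
    ((Complex.continuous_im.tendsto z₂).comp hz₂).congr' hIm2
  have key : z₁.im = 0 ∧ z₂.im = 0 := by
    by_cases hfreq : ∃ᶠ t in atTop, Fr p b d l t = 0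
    · have hz10 : z₁ = 0 :=
        tendsto_nhds_unique_of_frequently_eq hz₁ tendsto_const_nhds
          (hfreq.mono fun t ht => by rw [pir_eq, ht]; simp)
      have hz20 : z₂ = 0 :=
        tendsto_nhds_unique_of_frequently_eq hz₂ tendsto_const_nhds
          (hfreq.mono fun t ht => by rw [pir_eq, ht]; simp)
      rw [hz10, hz20]; simp
    · have hev : ∀ᶠ t in atTop, Fr p b d l t ≠ 0 := Filter.not_frequently.mp hfreq
      have hMpos : 0 < M := by
        obtain ⟨t, htl', hne⟩ := ((eventually_ge_atTop tl).and hev).exists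
        have h1 : pir p b d (l : ℂ) t ≠ 0 := by
          rw [pir_eq]; exact Complex.ofReal_ne_zero.mpr hne
        have h2 : 0 < ‖(pir p b d (l : ℂ) t)⁻¹‖ := norm_pos_iff.mpr (inv_ne_zero h1)
        linarith [(hM t htl').2.2]
      have hlow : ∀ᶠ t in atTop, M⁻¹ ≤ |Fr p b d l t| := by
        filter_upwards [hev, eventually_ge_atTop tl] with t h1 h2
        have h3 := (hM t h2).2.2
        rw [pir_eq, ← Complex.ofReal_inv, norm_ofReal_eq, abs_inv] at h3
        exact (inv_le_comm₀ hMpos (abs_pos.mpr h1)).mpr h3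
      obtain ⟨C, hC⟩ := Fr_bounded hB l hl2
      have him1 : z₁.im = 0 := by
        by_contra hne1
        have hz1pos : 0 < |z₁.im| := abs_pos.mpr hne1
        have heps : 0 < |z₁.im| / 2 * M⁻¹ :=
          mul_pos (half_pos hz1pos) (inv_pos.mpr hMpos)
        apply no_big_deriv heps
        have hev2 : ∀ᶠ t in atTop,
            |z₁.im| / 2 ≤ |deriv (Fr p b d l) t / Fr p b d l t| :=
          tIm1.abs.eventually (eventually_ge_nhds (by linarith))
        filter_upwards [hFd, hC, hlow, hev2, hev] with t h1 h2 h3 h4 h5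
        refine ⟨h1, h2, ?_⟩
        have h6 : |deriv (Fr p b d l) t|
            = |deriv (Fr p b d l) t / Fr p b d l t| * |Fr p b d l t| := by
          rw [abs_div]; field_simp
        rw [h6]
        exact mul_le_mul h4 h3 (by positivity) (abs_nonneg _)
      have tdf : Tendsto (fun t => deriv (Fr p b d l) t / Fr p b d l t) atTop (nhds 0) := by
        rwa [him1] at tIm1
      have him2 : z₂.im = 0 := by
        by_contra hne2
        have hz2pos : 0 < |z₂.im| := abs_pos.mpr hne2
        have hpsid : ∀ᶠ t in atTop,
            HasDerivAt (fun s => Gr b c d l s / Fr p b d l s)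
              (deriv (Gr b c d l) t / Fr p b d l t
                - (Gr b c d l t / Fr p b d l t) * (deriv (Fr p b d l) t / Fr p b d l t)) t := by
          filter_upwards [hFd, hHd, hev] with t h1 h2 h3
          have hg := Gr_hasDeriv h2
          have hdiv := hg.div h1.hasDerivAt h3
          refine hdiv.congr_deriv ?_
          rw [← hg.deriv]
          field_simp
        have hpsidiff : ∀ᶠ t in atTop,
            DifferentiableAt ℝ (fun s => Gr b c d l s / Fr p b d l s) t :=
          hpsid.mono fun t h => h.differentiableAt
        have hderiv_eq : ∀ᶠ t in atTop,
            deriv (Gr b c d l) t / Fr p b d l t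
              - (Gr b c d l t / Fr p b d l t) * (deriv (Fr p b d l) t / Fr p b d l t)
            = deriv (fun s => Gr b c d l s / Fr p b d l s) t :=
          hpsid.mono fun t h => (h.deriv).symm
        have tpsi' : Tendsto (fun t => deriv (fun s => Gr b c d l s / Fr p b d l s) t)
            atTop (nhds z₂.im) := by
          have t1 := tIm2.sub (tGF.mul tdf)
          have t2 := t1.congr' hderiv_eq
          simpa using t2
        have hpsibound : ∀ᶠ t in atTop,
            |Gr b c d l t / Fr p b d l t| ≤ |z₁.re / 2| + 1 :=
          tGF.abs.eventually (eventually_le_nhds (by linarith [abs_nonneg (z₁.re / 2)]))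
        apply no_big_deriv (half_pos hz2pos)
        have hev3 : ∀ᶠ t in atTop,
            |z₂.im| / 2 ≤ |deriv (fun s => Gr b c d l s / Fr p b d l s) t| :=
          tpsi'.abs.eventually (eventually_ge_nhds (by linarith))
        filter_upwards [hpsidiff, hpsibound, hev3] with t a1 a2 a3
        exact ⟨a1, a2, a3⟩
      exact ⟨him1, him2⟩
  obtain ⟨him1, him2⟩ := key
  refine ⟨?_, ⟨z₁.re, ?_⟩, ⟨z₂.re, ?_⟩⟩
  · have heq : ∀ᶠ t in atTop,
        ((deriv (Fr p b d l) t / Fr p b d l t : ℝ) : ℂ)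
          = deriv (pir p b d (l : ℂ)) t / pir p b d (l : ℂ) t := by
      filter_upwards [hFd] with t ht
      rw [deriv_pir_eq ht, pir_eq, ← Complex.ofReal_div]
    have tdf0 : Tendsto (fun t => deriv (Fr p b d l) t / Fr p b d l t) atTop (nhds 0) := by
      rwa [him1] at tIm1
    have t0 : Tendsto (fun t => ((deriv (Fr p b d l) t / Fr p b d l t : ℝ) : ℂ)) atTop
        (nhds (((0 : ℝ) : ℂ))) := (Complex.continuous_ofReal.tendsto 0).comp tdf0
    simpa using t0.congr' heq
  · have hzeq : ((z₁.re : ℝ) : ℂ) = z₁ := Complex.ext (by simp) (by simp [him1])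
    rwa [hzeq]
  · have hzeq : ((z₂.re : ℝ) : ℂ) = z₂ := Complex.ext (by simp) (by simp [him2])
    rwa [hzeq]

end PaperEss
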